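/- arXiv:1612.02464 — 3 statements merged into one kernel-verified Lean document; each statement's English description precedes it below -/
import Mathlib

section
/- Let (c_n) be a sequence of positive reals with c_n^{1/n} → μ, and suppose for constants ε ∈ (0,1), integer m ≥ 1, positive constants κ > δ > 0 and an auxiliary bound of the following form holds for all n: |T_n| · C(⌊κn⌋, ⌊δn⌋) ≤ (Σ_{i=0}^{n+⌊c·δn⌋} c_i) · Z^{δ n} for constants c ≥ 0 and Z ≥ 1. Then limsup_{n→∞} |T_n|^{1/n} ≤ μ^{1+cδ} · Z^δ · δ^δ (κ-δ)^{κ-δ} / κ^κ. -/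
open Real Filter Topology

lemma floor_ratio_tendsto (r : ℝ) (hr : 0 ≤ r) :
    Tendsto (fun n : ℕ => (⌊r * n⌋₊ : ℝ) / n) atTop (𝓝 r) := by
  apply tendsto_of_tendsto_of_tendsto_of_le_of_le'
    (g := fun n : ℕ => r - 1 / n) (h := fun n : ℕ => (r : ℝ))
  · simpa using tendsto_const_nhds.sub (tendsto_one_div_atTop_nhds_zero_nat (𝕜 := ℝ))
  · exact tendsto_const_nhds
  · filter_upwards [eventually_ge_atTop 1] with n hn
    have hn' : (0:ℝ) < n := by exact_mod_cast hn
    rw [sub_le_iff_le_add, ← add_div, le_div_iff₀ hn']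
    have := Nat.sub_one_lt_floor (r * n)
    linarith
  · filter_upwards [eventually_ge_atTop 1] with n hn
    have hn' : (0:ℝ) < n := by exact_mod_cast hn
    rw [div_le_iff₀ hn']
    exact Nat.floor_le (by positivity)

lemma log_nat_div_tendsto {u : ℕ → ℕ} (hu : Tendsto u atTop atTop) {r : ℝ}
    (hr : Tendsto (fun n : ℕ => (u n : ℝ) / n) atTop (𝓝 r)) :
    Tendsto (fun n : ℕ => Real.log (u n) / n) atTop (𝓝 0) := by
  have h1 : Tendsto (fun n : ℕ => Real.log (u n) / (u n)) atTop (𝓝 0) :=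
    (Real.isLittleO_log_id_atTop.tendsto_div_nhds_zero).comp
      (tendsto_natCast_atTop_atTop.comp hu)
  have h2 := h1.mul hr
  rw [zero_mul] at h2
  apply h2.congr'
  filter_upwards [hu.eventually (eventually_ge_atTop 1), eventually_ge_atTop 1] with n h1n h2n
  have hun : (u n : ℝ) ≠ 0 := by
    have : (1:ℝ) ≤ u n := by exact_mod_cast h1n
    linarith
  have hn : (n:ℝ) ≠ 0 := by
    have : (1:ℝ) ≤ n := by exact_mod_cast h2n
    linarith
  field_simp


section maxterm
variable (a b : ℕ)

/-- the k-th term in the expansion of (b + (a-b))^a -/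
private def tt (a b k : ℕ) : ℕ := a.choose k * b ^ k * (a - b) ^ (a - k)

lemma tt_step (hba : b ≤ a) (k : ℕ) (hk : k < a) :
    tt a b (k+1) * ((k+1) * (a-b)) = tt a b k * ((a-k) * b) := by
  unfold tt
  have h1 : a - (k+1) + 1 = a - k := by omega
  have h2 : a.choose (k+1) * (k+1) = a.choose k * (a - k) := Nat.choose_succ_right_eq a k
  calc a.choose (k+1) * b ^ (k+1) * (a-b) ^ (a-(k+1)) * ((k+1) * (a-b))
      = (a.choose (k+1) * (k+1)) * (b ^ (k+1) * ((a-b) ^ (a-(k+1)) * (a-b))) := by ring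
    _ = (a.choose k * (a - k)) * (b ^ k * b * (a-b) ^ (a-k)) := by
        rw [h2, ← pow_succ, h1, pow_succ]
    _ = a.choose k * b ^ k * (a-b) ^ (a-k) * ((a-k) * b) := by ring

lemma tt_mono1 (hba : b < a) (k : ℕ) (hk : k < b) : tt a b k ≤ tt a b (k+1) := by
  have hstep := tt_step a b hba.le k (by omega)
  have hX : 0 < (k+1) * (a-b) := by
    have : 0 < a - b := by omega
    positivity
  have hXY : (k+1) * (a-b) ≤ (a-k) * b := by
    calc (k+1) * (a-b) ≤ b * (a-b) := Nat.mul_le_mul_right _ (by omega)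
      _ ≤ b * (a-k) := Nat.mul_le_mul_left _ (by omega)
      _ = (a-k) * b := Nat.mul_comm _ _
  have : tt a b k * ((k+1) * (a-b)) ≤ tt a b (k+1) * ((k+1) * (a-b)) := by
    calc tt a b k * ((k+1) * (a-b)) ≤ tt a b k * ((a-k) * b) := Nat.mul_le_mul_left _ hXY
      _ = tt a b (k+1) * ((k+1) * (a-b)) := hstep.symm
  exact Nat.le_of_mul_le_mul_right this hX

lemma tt_mono2 (hba : b < a) (k : ℕ) (hk : b ≤ k) : tt a b (k+1) ≤ tt a b k := by
  rcases lt_or_ge k a with hka | hka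
  · have hstep := tt_step a b hba.le k hka
    have hX : 0 < (k+1) * (a-b) := by
      have : 0 < a - b := by omega
      positivity
    have hYX : (a-k) * b ≤ (k+1) * (a-b) := by
      calc (a-k) * b ≤ (a-b) * b := Nat.mul_le_mul_right _ (by omega)
        _ ≤ (a-b) * (k+1) := Nat.mul_le_mul_left _ (by omega)
        _ = (k+1) * (a-b) := Nat.mul_comm _ _
    have : tt a b (k+1) * ((k+1) * (a-b)) ≤ tt a b k * ((k+1) * (a-b)) := by
      calc tt a b (k+1) * ((k+1) * (a-b)) = tt a b k * ((a-k) * b) := hstep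
        _ ≤ tt a b k * ((k+1) * (a-b)) := Nat.mul_le_mul_left _ hYX
    exact Nat.le_of_mul_le_mul_right this hX
  · have : a.choose (k+1) = 0 := Nat.choose_eq_zero_of_lt (by omega)
    unfold tt
    rw [this]
    simp

lemma tt_le_tt_b (hba : b < a) (k : ℕ) : tt a b k ≤ tt a b b := by
  rcases le_or_gt k b with hkb | hbk
  · obtain ⟨d, hd⟩ : ∃ d, k + d = b := ⟨b - k, by omega⟩
    clear hkb
    induction d generalizing k with
    | zero =>
      obtain rfl : k = b := by omega
      exact le_rfl
    | succ d ih =>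
      have hk : k < b := by omega
      exact (tt_mono1 a b hba k hk).trans (ih (k+1) (by omega))
  · have key : ∀ d, tt a b (b + d) ≤ tt a b b := by
      intro d
      induction d with
      | zero => exact le_rfl
      | succ d ih =>
        exact (tt_mono2 a b hba (b + d) (by omega)).trans ih
    obtain ⟨d, hd⟩ : ∃ d, k = b + d := ⟨k - b, by omega⟩
    exact hd ▸ key d

lemma pow_le_mul_tt (hba : b < a) : a ^ a ≤ (a + 1) * tt a b b := by
  have hexp : a ^ a = ∑ k ∈ Finset.range (a+1), tt a b k := by
    have h : b + (a - b) = a := by omega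
    calc a ^ a = (b + (a-b)) ^ a := by rw [h]
      _ = ∑ k ∈ Finset.range (a+1), b^k * (a-b)^(a-k) * a.choose k := by
          rw [add_pow]; simp only [h, Nat.cast_id]
      _ = ∑ k ∈ Finset.range (a+1), tt a b k := by
          refine Finset.sum_congr rfl fun k _ => ?_
          unfold tt; ring
  rw [hexp]
  calc ∑ k ∈ Finset.range (a+1), tt a b k ≤ ∑ _k ∈ Finset.range (a+1), tt a b b :=
        Finset.sum_le_sum fun k _ => tt_le_tt_b a b hba k
    _ = (a+1) * tt a b b := by rw [Finset.sum_const, Finset.card_range, smul_eq_mul]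

lemma tt_le_pow (hba : b ≤ a) : tt a b b ≤ a ^ a := by
  have hexp : a ^ a = ∑ k ∈ Finset.range (a+1), tt a b k := by
    have h : b + (a - b) = a := by omega
    calc a ^ a = (b + (a-b)) ^ a := by rw [h]
      _ = ∑ k ∈ Finset.range (a+1), b^k * (a-b)^(a-k) * a.choose k := by
          rw [add_pow]; simp only [h, Nat.cast_id]
      _ = ∑ k ∈ Finset.range (a+1), tt a b k := by
          refine Finset.sum_congr rfl fun k _ => ?_
          unfold tt; ring
  rw [hexp]
  exact Finset.single_le_sum (fun k _ => Nat.zero_le _) (Finset.mem_range.2 (by omega))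
end maxterm


lemma pow_le_mul_tt' (a b : ℕ) (hba : b < a) :
    a ^ a ≤ (a + 1) * (a.choose b * b ^ b * (a - b) ^ (a - b)) := pow_le_mul_tt a b hba

lemma tt_le_pow' (a b : ℕ) (hba : b ≤ a) :
    a.choose b * b ^ b * (a - b) ^ (a - b) ≤ a ^ a := tt_le_pow a b hba

lemma choose_rpow_tendsto (κ δ : ℝ) (hδ : 0 < δ) (hδκ : δ < κ) :
    Tendsto (fun n : ℕ => ((⌊κ * n⌋₊.choose ⌊δ * n⌋₊ : ℕ) : ℝ) ^ ((1:ℝ)/n)) atTop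
      (𝓝 (Real.exp (κ * Real.log κ - δ * Real.log δ - (κ-δ) * Real.log (κ-δ)))) := by
  have hκ : 0 < κ := hδ.trans hδκ
  set a : ℕ → ℕ := fun n => ⌊κ * n⌋₊ with ha
  set b : ℕ → ℕ := fun n => ⌊δ * n⌋₊ with hb
  have hA : Tendsto (fun n : ℕ => (a n : ℝ) / n) atTop (𝓝 κ) := floor_ratio_tendsto κ hκ.le
  have hB : Tendsto (fun n : ℕ => (b n : ℝ) / n) atTop (𝓝 δ) := floor_ratio_tendsto δ hδ.le
  -- eventual goodness
  have hev : ∀ᶠ n : ℕ in atTop, 1 ≤ n ∧ 1 ≤ b n ∧ b n < a n := by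
    have h1 : ∀ᶠ n : ℕ in atTop, 1 ≤ b n := by
      filter_upwards [eventually_ge_atTop (⌈1/δ⌉₊ + 1)] with n hn
      apply Nat.le_floor
      have h2 : (1:ℝ)/δ ≤ (⌈1/δ⌉₊ : ℝ) := Nat.le_ceil _
      have h3 : ((⌈1/δ⌉₊ + 1 : ℕ) : ℝ) ≤ n := by exact_mod_cast hn
      push_cast at h3
      rw [div_le_iff₀ hδ] at h2
      push_cast
      nlinarith
    have h2 : ∀ᶠ n : ℕ in atTop, b n < a n := by
      filter_upwards [eventually_ge_atTop (⌈1/(κ-δ)⌉₊ + 1)] with n hn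
      have h2 : (1:ℝ)/(κ-δ) ≤ (⌈1/(κ-δ)⌉₊ : ℝ) := Nat.le_ceil _
      have h3 : ((⌈1/(κ-δ)⌉₊ + 1 : ℕ) : ℝ) ≤ n := by exact_mod_cast hn
      push_cast at h3
      rw [div_le_iff₀ (by linarith : (0:ℝ) < κ - δ)] at h2
      have hbd : (b n : ℝ) < (a n : ℝ) := by
        have hfl : (b n : ℝ) ≤ δ * n := Nat.floor_le (by positivity)
        have hfl2 : κ * n - 1 < (a n : ℝ) := Nat.sub_one_lt_floor _
        nlinarith
      exact_mod_cast hbd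
    filter_upwards [h1, h2, eventually_ge_atTop 1] with n hn1 hn2 hn3
    exact ⟨hn3, hn1, hn2⟩
  set cn : ℕ → ℕ := fun n => a n - b n with hcn
  have hC : Tendsto (fun n : ℕ => (cn n : ℝ) / n) atTop (𝓝 (κ - δ)) := by
    apply (hA.sub hB).congr'
    filter_upwards [hev] with n hn
    rw [hcn]
    push_cast [Nat.cast_sub hn.2.2.le]
    ring
  -- phi limits
  have phi_lim : ∀ (r : ℝ), 0 < r → ∀ (u : ℕ → ℕ),
      Tendsto (fun n : ℕ => (u n : ℝ) / n) atTop (𝓝 r) →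
      Tendsto (fun n : ℕ => ((u n : ℝ)/n) * Real.log ((u n : ℝ)/n)) atTop (𝓝 (r * Real.log r)) := by
    intro r hr u hu
    have cont : ContinuousAt (fun x : ℝ => x * Real.log x) r :=
      continuousAt_id.mul (Real.continuousAt_log hr.ne')
    exact cont.tendsto.comp hu
  have hφA := phi_lim κ hκ a hA
  have hφB := phi_lim δ hδ b hB
  have hφC := phi_lim (κ - δ) (by linarith) cn hC
  set Pn : ℕ → ℝ := fun n =>
    (a n : ℝ) * Real.log (a n) - (b n : ℝ) * Real.log (b n) - (cn n : ℝ) * Real.log (cn n)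
    with hPn
  have hPdiv : Tendsto (fun n => Pn n / n) atTop
      (𝓝 (κ * Real.log κ - δ * Real.log δ - (κ-δ) * Real.log (κ-δ))) := by
    apply ((hφA.sub hφB).sub hφC).congr'
    filter_upwards [hev] with n hn
    have hn0 : (0:ℝ) < n := by exact_mod_cast hn.1
    have hA1 : (0:ℝ) < a n := by
      have : (1:ℕ) ≤ a n := le_of_lt (lt_of_le_of_lt hn.2.1 hn.2.2)
      exact_mod_cast this
    have hB1 : (0:ℝ) < b n := by exact_mod_cast hn.2.1
    have hC1 : (0:ℝ) < cn n := by
      have : 1 ≤ cn n := by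
        simp only [hcn]; omega
      exact_mod_cast this
    have habc : (a n : ℝ) = (b n : ℝ) + (cn n : ℝ) := by
      have := hn.2.2.le
      push_cast [hcn, Nat.cast_sub this]
      ring
    rw [Real.log_div hA1.ne' hn0.ne', Real.log_div hB1.ne' hn0.ne',
      Real.log_div hC1.ne' hn0.ne', hPn]
    field_simp
    linear_combination (-(Real.log ↑n)) * habc
  -- log choose bounds
  have hatop : Tendsto a atTop atTop := by
    have h1 : Tendsto (fun n : ℕ => κ * n) atTop atTop :=
      Tendsto.const_mul_atTop hκ tendsto_natCast_atTop_atTop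
    exact tendsto_nat_floor_atTop.comp h1
  have haplus : Tendsto (fun n : ℕ => Real.log (a n + 1) / n) atTop (𝓝 0) := by
    have hu : Tendsto (fun n => a n + 1) atTop atTop :=
      tendsto_atTop_mono (fun n => Nat.le_succ (a n)) hatop
    have hr : Tendsto (fun n : ℕ => ((a n + 1 : ℕ) : ℝ) / n) atTop (𝓝 κ) := by
      have := hA.add (tendsto_one_div_atTop_nhds_zero_nat)
      rw [add_zero] at this
      apply this.congr
      intro n
      push_cast
      rw [← add_div]
    have := log_nat_div_tendsto hu hr
    apply this.congr
    intro n
    push_cast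
    rfl
  have hlogle : ∀ᶠ n : ℕ in atTop,
      Real.log ((a n).choose (b n)) ≤ Pn n ∧
      Pn n - Real.log (a n + 1) ≤ Real.log ((a n).choose (b n)) := by
    filter_upwards [hev] with n hn
    obtain ⟨hn1, hnb, hnba⟩ := hn
    have hcpos : 0 < (a n).choose (b n) := Nat.choose_pos hnba.le
    have hbpos : 0 < b n := hnb
    have hcnpos : 0 < cn n := by simp only [hcn]; omega
    have hCR : (0:ℝ) < (a n).choose (b n) := by exact_mod_cast hcpos
    have hBR : (0:ℝ) < b n := by exact_mod_cast hbpos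
    have hCNR : (0:ℝ) < cn n := by exact_mod_cast hcnpos
    have hAR : (0:ℝ) < a n := by
      have : 0 < a n := lt_of_le_of_lt (Nat.zero_le _) hnba
      exact_mod_cast this
    have hlogprod : Real.log (((a n).choose (b n) : ℝ) * (b n : ℝ) ^ (b n) * (cn n : ℝ) ^ (cn n))
        = Real.log ((a n).choose (b n)) + (b n : ℝ) * Real.log (b n) + (cn n : ℝ) * Real.log (cn n) := by
      rw [Real.log_mul (by positivity) (by positivity), Real.log_mul (by positivity) (by positivity),
        Real.log_pow, Real.log_pow]
    constructor
    · -- upper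
      have h := tt_le_pow' (a n) (b n) hnba.le
      have hR : ((a n).choose (b n) : ℝ) * (b n : ℝ) ^ (b n) * (cn n : ℝ) ^ (cn n) ≤ (a n : ℝ) ^ (a n) := by
        exact_mod_cast h
      have := Real.log_le_log (by positivity) hR
      rw [hlogprod, Real.log_pow] at this
      simp only [hPn]
      push_cast at this ⊢
      linarith
    · -- lower
      have h := pow_le_mul_tt' (a n) (b n) hnba
      have hR : (a n : ℝ) ^ (a n) ≤ ((a n : ℝ) + 1) * (((a n).choose (b n) : ℝ) * (b n : ℝ) ^ (b n) * (cn n : ℝ) ^ (cn n)) := by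
        exact_mod_cast h
      have hlog := Real.log_le_log (pow_pos hAR _) hR
      rw [Real.log_mul (by positivity) (by positivity), hlogprod, Real.log_pow] at hlog
      simp only [hPn]
      push_cast at hlog ⊢
      linarith
  have hlogchoose : Tendsto (fun n : ℕ => Real.log ((a n).choose (b n)) / n) atTop
      (𝓝 (κ * Real.log κ - δ * Real.log δ - (κ-δ) * Real.log (κ-δ))) := by
    apply tendsto_of_tendsto_of_tendsto_of_le_of_le'
      (g := fun n : ℕ => Pn n / n - Real.log (a n + 1) / n) (h := fun n : ℕ => Pn n / n)
    · simpa using hPdiv.sub haplus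
    · exact hPdiv
    · filter_upwards [hlogle, eventually_ge_atTop 1] with n hn hn1
      have hn0 : (0:ℝ) < n := by exact_mod_cast hn1
      rw [← sub_div]
      gcongr
      exact hn.2
    · filter_upwards [hlogle, eventually_ge_atTop 1] with n hn hn1
      have hn0 : (0:ℝ) < n := by exact_mod_cast hn1
      gcongr
      exact hn.1
  -- convert to rpow
  have hpos : ∀ᶠ n : ℕ in atTop, 0 < (a n).choose (b n) := by
    filter_upwards [hev] with n hn
    exact Nat.choose_pos hn.2.2.le
  have := (Real.continuous_exp.tendsto _).comp hlogchoose
  apply this.congr'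
  filter_upwards [hpos, eventually_ge_atTop 1] with n hn hn1
  have hCR : (0:ℝ) < (a n).choose (b n) := by exact_mod_cast hn
  simp only [Function.comp_apply]
  rw [Real.rpow_def_of_pos hCR, mul_one_div]

lemma logS_tendsto (c : ℕ → ℝ) (μ : ℝ) (hμ : 1 < μ) (hc : ∀ n, 0 < c n)
    (hlim : Tendsto (fun n : ℕ => (c n) ^ ((1 : ℝ) / n)) atTop (𝓝 μ))
    (ρ : ℝ) (hρ : 0 ≤ ρ) :
    Tendsto (fun n : ℕ => Real.log (∑ i ∈ Finset.range (n + ⌊ρ * n⌋₊ + 1), c i) / n) atTop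
      (𝓝 ((1 + ρ) * Real.log μ)) := by
  have hμ0 : (0:ℝ) < μ := by linarith
  set lam := Real.log μ with hlam
  have hlam0 : 0 < lam := Real.log_pos hμ
  set N : ℕ → ℕ := fun n => n + ⌊ρ * n⌋₊ with hN
  set S : ℕ → ℝ := fun n => ∑ i ∈ Finset.range (N n + 1), c i with hS
  have hSpos : ∀ n, 0 < S n := fun n =>
    Finset.sum_pos (fun i _ => hc i) ⟨0, Finset.mem_range.2 (Nat.succ_pos _)⟩
  have hd : Tendsto (fun i : ℕ => Real.log (c i) / i) atTop (𝓝 lam) := by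
    have := (Real.continuousAt_log hμ0.ne').tendsto.comp hlim
    apply this.congr
    intro i
    simp only [Function.comp_apply]
    rw [Real.log_rpow (hc i), one_div, inv_mul_eq_div]
  have hNtop : Tendsto N atTop atTop :=
    tendsto_atTop_mono (fun n => Nat.le_add_right n _) tendsto_id
  have hNr : Tendsto (fun n : ℕ => (N n : ℝ) / n) atTop (𝓝 (1 + ρ)) := by
    have h0 := (tendsto_const_nhds (x := (1:ℝ)) (f := atTop)).add (floor_ratio_tendsto ρ hρ)
    apply h0.congr'
    filter_upwards [eventually_ge_atTop 1] with n hn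
    have hn0 : (0:ℝ) < n := by exact_mod_cast hn
    simp only [hN]
    push_cast
    field_simp
  have hlow : Tendsto (fun n : ℕ => ((N n : ℝ) / n) * (Real.log (c (N n)) / (N n))) atTop
      (𝓝 ((1 + ρ) * lam)) := hNr.mul (hd.comp hNtop)
  rw [tendsto_order]
  constructor
  · intro x hx
    have h1 : ∀ᶠ n : ℕ in atTop, x < ((N n : ℝ) / n) * (Real.log (c (N n)) / (N n)) :=
      hlow.eventually (eventually_gt_nhds hx)
    filter_upwards [h1, eventually_ge_atTop 1] with n hn hn1
    have hn0 : (0:ℝ) < n := by exact_mod_cast hn1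
    have hNn0 : (0:ℝ) < N n := by
      have : 1 ≤ N n := le_trans hn1 (Nat.le_add_right n _)
      exact_mod_cast this
    have heq : ((N n : ℝ) / n) * (Real.log (c (N n)) / (N n)) = Real.log (c (N n)) / n := by
      field_simp
    rw [heq] at hn
    have hle : Real.log (c (N n)) ≤ Real.log (S n) :=
      Real.log_le_log (hc _)
        (Finset.single_le_sum (fun i _ => (hc i).le) (Finset.mem_range.2 (Nat.lt_succ_self _)))
    calc x < Real.log (c (N n)) / n := hn
      _ ≤ Real.log (S n) / n := by gcongr
  · intro x hx
    set η := (x - (1 + ρ) * lam) / (2 + ρ) with hη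
    have hη0 : 0 < η := by
      apply div_pos (by linarith) (by linarith)
    have hkey : (1 + ρ) * lam + η * (1 + ρ) < x := by
      have : η * (2 + ρ) = x - (1 + ρ) * lam := by
        rw [hη]; field_simp
      nlinarith
    have hle0 : 0 < lam + η := by linarith
    obtain ⟨i0, hi0⟩ := eventually_atTop.1
      (hd.eventually (eventually_lt_nhds (by linarith : lam < lam + η)))
    set i1 := i0 + 1 with hi1
    set C0 : ℝ := ∑ i ∈ Finset.range i1, c i with hC0
    have hC00 : 0 ≤ C0 := Finset.sum_nonneg fun i _ => (hc i).le
    have hterm : ∀ n, ∀ i ≤ N n, c i ≤ C0 + Real.exp ((lam + η) * N n) := by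
      intro n i hi
      rcases lt_or_ge i i1 with hii | hii
      · have h1 : c i ≤ C0 :=
          Finset.single_le_sum (fun j _ => (hc j).le) (Finset.mem_range.2 hii)
        have h2 : (0:ℝ) < Real.exp ((lam + η) * N n) := Real.exp_pos _
        linarith
      · have h1 : Real.log (c i) / i < lam + η := hi0 i (by omega)
        have hipos : (0:ℝ) < i := by
          have : 1 ≤ i := by omega
          exact_mod_cast this
        have h2 : Real.log (c i) < (lam + η) * i := by
          rw [div_lt_iff₀ hipos] at h1
          linarith
        have h3 : c i < Real.exp ((lam + η) * i) := by
          calc c i = Real.exp (Real.log (c i)) := (Real.exp_log (hc i)).symm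
            _ < Real.exp ((lam + η) * i) := Real.exp_lt_exp.2 h2
        have h4 : Real.exp ((lam + η) * i) ≤ Real.exp ((lam + η) * N n) := by
          apply Real.exp_le_exp.2
          have : (i:ℝ) ≤ N n := by exact_mod_cast hi
          nlinarith
        linarith
    have hSb : ∀ n, S n ≤ ((N n : ℝ) + 1) * ((C0 + 1) * Real.exp ((lam + η) * N n)) := by
      intro n
      have h1 : S n ≤ ∑ _i ∈ Finset.range (N n + 1), (C0 + Real.exp ((lam + η) * N n)) := by
        apply Finset.sum_le_sum
        intro i hi
        exact hterm n i (Nat.lt_succ_iff.1 (Finset.mem_range.1 hi))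
      rw [Finset.sum_const, Finset.card_range, nsmul_eq_mul] at h1
      have hcard : ((N n + 1 : ℕ) : ℝ) = (N n : ℝ) + 1 := by push_cast; ring
      rw [hcard] at h1
      have hE1 : 1 ≤ Real.exp ((lam + η) * N n) := by
        apply Real.one_le_exp
        positivity
      have hN1 : (0:ℝ) ≤ (N n : ℝ) + 1 := by positivity
      have h2 : C0 + Real.exp ((lam + η) * N n) ≤ (C0 + 1) * Real.exp ((lam + η) * N n) := by
        nlinarith
      have h3 := mul_le_mul_of_nonneg_left h2 hN1
      linarith
    -- bounding sequence
    have hu1 : Tendsto (fun n : ℕ => Real.log ((N n : ℝ) + 1) / n) atTop (𝓝 0) := by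
      have hu : Tendsto (fun n => N n + 1) atTop atTop :=
        tendsto_atTop_mono (fun n => Nat.le_succ (N n)) hNtop
      have hr : Tendsto (fun n : ℕ => ((N n + 1 : ℕ) : ℝ) / n) atTop (𝓝 (1 + ρ)) := by
        have h0 := hNr.add (tendsto_one_div_atTop_nhds_zero_nat)
        rw [add_zero] at h0
        apply h0.congr
        intro n
        push_cast
        rw [← add_div]
      have := log_nat_div_tendsto hu hr
      apply this.congr
      intro n
      push_cast
      rfl
    have hu2 : Tendsto (fun n : ℕ => Real.log (C0 + 1) / n) atTop (𝓝 0) :=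
      tendsto_const_div_atTop_nhds_zero_nat _
    have hu3 : Tendsto (fun n : ℕ => (lam + η) * ((N n : ℝ) / n)) atTop
        (𝓝 ((lam + η) * (1 + ρ))) := tendsto_const_nhds.mul hNr
    have hutot : Tendsto (fun n : ℕ =>
        Real.log ((N n : ℝ) + 1) / n + Real.log (C0 + 1) / n + (lam + η) * ((N n : ℝ) / n))
        atTop (𝓝 ((lam + η) * (1 + ρ))) := by
      have := (hu1.add hu2).add hu3
      simpa using this
    have hlt : (lam + η) * (1 + ρ) < x := by nlinarith
    have hev2 : ∀ᶠ n : ℕ in atTop,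
        Real.log ((N n : ℝ) + 1) / n + Real.log (C0 + 1) / n + (lam + η) * ((N n : ℝ) / n) < x :=
      hutot.eventually (eventually_lt_nhds hlt)
    filter_upwards [hev2, eventually_ge_atTop 1] with n hn hn1
    have hn0 : (0:ℝ) < n := by exact_mod_cast hn1
    have hlogS : Real.log (S n) ≤
        Real.log ((N n : ℝ) + 1) + Real.log (C0 + 1) + (lam + η) * N n := by
      have h1 := Real.log_le_log (hSpos n) (hSb n)
      have e1 : Real.log (((N n : ℝ) + 1) * ((C0 + 1) * Real.exp ((lam + η) * N n)))
          = Real.log ((N n : ℝ) + 1) + (Real.log (C0 + 1) + (lam + η) * N n) := by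
        rw [Real.log_mul (by positivity) (by positivity),
          Real.log_mul (by positivity) (Real.exp_pos _).ne', Real.log_exp]
      rw [e1] at h1
      linarith
    show Real.log (S n) / n < x
    calc Real.log (S n) / n ≤
        (Real.log ((N n : ℝ) + 1) + Real.log (C0 + 1) + (lam + η) * N n) / n := by gcongr
      _ = Real.log ((N n : ℝ) + 1) / n + Real.log (C0 + 1) / n + (lam + η) * ((N n : ℝ) / n) := by
          field_simp
      _ < x := hn


/-- Abstract counting comparison: if `c_n^{1/n} → μ` and for all `n`
`|T_n| · C(⌊κn⌋, ⌊δn⌋) ≤ (Σ_{i=0}^{n+⌊c·δn⌋} c_i) · Z^{δn}`, then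
`limsup |T_n|^{1/n} ≤ μ^{1+cδ} · Z^δ · δ^δ (κ-δ)^{κ-δ} / κ^κ`. -/
theorem stmt_6 {α : Type*} (c : ℕ → ℝ) (μ : ℝ) (hμ : 1 < μ) (hc : ∀ n, 0 < c n)
    (hlim : Tendsto (fun n : ℕ => (c n) ^ ((1 : ℝ) / n)) atTop (𝓝 μ))
    (ε : ℝ) (hε0 : 0 < ε) (hε1 : ε < 1) (m : ℕ) (hm : 1 ≤ m)
    (κ δ cc Z : ℝ) (hδ : 0 < δ) (hδκ : δ < κ) (hcc : 0 ≤ cc) (hZ : 1 ≤ Z)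
    (T : ℕ → Finset α)
    (hbound : ∀ n : ℕ,
      ((T n).card : ℝ) * (Nat.choose ⌊κ * n⌋₊ ⌊δ * n⌋₊ : ℝ) ≤
        (∑ i ∈ Finset.range (n + ⌊cc * δ * n⌋₊ + 1), c i) * Z ^ (δ * n)) :
    Filter.limsup (fun n : ℕ => ((T n).card : ℝ) ^ ((1 : ℝ) / n)) atTop ≤
      μ ^ (1 + cc * δ) * Z ^ δ * δ ^ δ * (κ - δ) ^ (κ - δ) / κ ^ κ := by
  have hκ : 0 < κ := hδ.trans hδκ
  have hκδ : 0 < κ - δ := by linarith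
  have hμ0 : (0:ℝ) < μ := by linarith
  have hZ0 : (0:ℝ) < Z := by linarith
  set LB := κ * Real.log κ - δ * Real.log δ - (κ - δ) * Real.log (κ - δ) with hLB
  have hchoose := choose_rpow_tendsto κ δ hδ hδκ
  have hlogS := logS_tendsto c μ hμ hc hlim (cc * δ) (by positivity)
  have hSpos : ∀ n : ℕ, 0 < ∑ i ∈ Finset.range (n + ⌊cc * δ * n⌋₊ + 1), c i := fun n =>
    Finset.sum_pos (fun i _ => hc i) ⟨0, Finset.mem_range.2 (Nat.succ_pos _)⟩
  have hSrpow : Tendsto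
      (fun n : ℕ => (∑ i ∈ Finset.range (n + ⌊cc * δ * n⌋₊ + 1), c i) ^ ((1:ℝ)/n))
      atTop (𝓝 (Real.exp ((1 + cc * δ) * Real.log μ))) := by
    have h0 := (Real.continuous_exp.tendsto _).comp hlogS
    apply h0.congr
    intro n
    simp only [Function.comp_apply]
    rw [Real.rpow_def_of_pos (hSpos n), mul_one_div]
  set g : ℕ → ℝ := fun n =>
    (∑ i ∈ Finset.range (n + ⌊cc * δ * n⌋₊ + 1), c i) ^ ((1:ℝ)/n) * Z ^ δ /
      ((⌊κ * n⌋₊.choose ⌊δ * n⌋₊ : ℕ) : ℝ) ^ ((1:ℝ)/n) with hg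
  have hgt : Tendsto g atTop
      (𝓝 (Real.exp ((1 + cc * δ) * Real.log μ) * Z ^ δ / Real.exp LB)) :=
    (hSrpow.mul tendsto_const_nhds).div hchoose (Real.exp_ne_zero _)
  have hconst : Real.exp ((1 + cc * δ) * Real.log μ) * Z ^ δ / Real.exp LB
      = μ ^ (1 + cc * δ) * Z ^ δ * δ ^ δ * (κ - δ) ^ (κ - δ) / κ ^ κ := by
    rw [hLB, Real.exp_sub, Real.exp_sub]
    rw [Real.rpow_def_of_pos hμ0, Real.rpow_def_of_pos hδ, Real.rpow_def_of_pos hκδ,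
      Real.rpow_def_of_pos hκ, mul_comm ((1:ℝ) + cc * δ) (Real.log μ)]
    field_simp
  have hCpos : ∀ n : ℕ, 0 < ⌊κ * n⌋₊.choose ⌊δ * n⌋₊ := by
    intro n
    apply Nat.choose_pos
    apply Nat.floor_le_floor
    have : (0:ℝ) ≤ (n:ℝ) := Nat.cast_nonneg n
    nlinarith
  have hfg : ∀ᶠ n : ℕ in atTop, ((T n).card : ℝ) ^ ((1:ℝ)/n) ≤ g n := by
    filter_upwards [eventually_ge_atTop 1] with n hn1
    have hn0 : (0:ℝ) < n := by exact_mod_cast hn1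
    have hCR : (0:ℝ) < ((⌊κ * n⌋₊.choose ⌊δ * n⌋₊ : ℕ) : ℝ) := by exact_mod_cast hCpos n
    have hle : ((T n).card : ℝ) ≤
        (∑ i ∈ Finset.range (n + ⌊cc * δ * n⌋₊ + 1), c i) * Z ^ (δ * n) /
          ((⌊κ * n⌋₊.choose ⌊δ * n⌋₊ : ℕ) : ℝ) := by
      rw [le_div_iff₀ hCR]
      exact hbound n
    have h2 : ((T n).card : ℝ) ^ ((1:ℝ)/n) ≤
        ((∑ i ∈ Finset.range (n + ⌊cc * δ * n⌋₊ + 1), c i) * Z ^ (δ * n) /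
          ((⌊κ * n⌋₊.choose ⌊δ * n⌋₊ : ℕ) : ℝ)) ^ ((1:ℝ)/n) :=
      Real.rpow_le_rpow (Nat.cast_nonneg _) hle (by positivity)
    refine h2.trans_eq ?_
    have hZ1 : (Z ^ (δ * (n:ℝ))) ^ ((1:ℝ)/n) = Z ^ δ := by
      rw [← Real.rpow_mul hZ0.le]
      congr 1
      field_simp
    rw [Real.div_rpow (mul_nonneg (hSpos n).le (by positivity)) hCR.le,
      Real.mul_rpow (hSpos n).le (by positivity), hZ1]
  have hbg : IsBoundedUnder (· ≤ ·) atTop g := hgt.isBoundedUnder_le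
  have hcb : IsCoboundedUnder (· ≤ ·) atTop
      (fun n : ℕ => ((T n).card : ℝ) ^ ((1:ℝ)/n)) := by
    apply Filter.IsBoundedUnder.isCoboundedUnder_le
    refine isBoundedUnder_of ⟨0, fun n => ?_⟩
    exact Real.rpow_nonneg (Nat.cast_nonneg _) _
  calc Filter.limsup (fun n : ℕ => ((T n).card : ℝ) ^ ((1:ℝ)/n)) atTop
      ≤ Filter.limsup g atTop := limsup_le_limsup hfg hcb hbg
    _ = _ := by rw [hgt.limsup_eq, hconst]
end

section
/- Let Γ be a group acting quasi-transitively on a connected locally finite graph G, i.e., the vertex set V has finitely many Γ-orbits. Let G₁ be a connected component of G \ ΓS for a finite vertex set S (where ΓS denotes the union of all images γS, γ ∈ Γ). Then the setwise stabilizer Γ₁ = {γ ∈ Γ : γ·V(G₁) = V(G₁)} acts quasi-transitively on G₁, i.e., V(G₁) has finitely many Γ₁-orbits. -/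
open Pointwise

/-- If `Γ` acts quasi-transitively on a connected locally finite graph `G`
(by graph automorphisms) and `G₁` is a connected component of `G \ ΓS` for a finite
vertex set `S`, then the setwise stabilizer of `V(G₁)` in `Γ` acts quasi-transitively
on `G₁`. -/
theorem stmt_9 {V : Type*} (G : SimpleGraph V) (Γ : Type*) [Group Γ] [MulAction Γ V]
    (hAdj : ∀ (γ : Γ) (u v : V), G.Adj (γ • u) (γ • v) ↔ G.Adj u v)
    (hconn : G.Connected) (hlf : G.LocallyFinite)
    (hqt : ∃ W : Finset V, ∀ v : V, ∃ γ : Γ, ∃ w ∈ W, γ • w = v)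
    (S : Finset V)
    (ΓS : Set V) (hΓS : ΓS = {v : V | ∃ γ : Γ, ∃ s ∈ S, γ • (s : V) = v})
    (c : (G.induce ΓSᶜ).ConnectedComponent)
    (V₁ : Set V) (hV₁ : V₁ = Subtype.val '' c.supp) :
    ∃ W₁ : Finset V, ↑W₁ ⊆ V₁ ∧
      ∀ v ∈ V₁, ∃ γ ∈ MulAction.stabilizer Γ V₁, ∃ w ∈ W₁, γ • (w : V) = v := by
  classical
  obtain ⟨W, hW⟩ := hqt
  -- ΓS is Γ-invariant
  have hGS : ∀ (g : Γ) (x : V), x ∈ ΓS → g • x ∈ ΓS := by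
    intro g x hx
    rw [hΓS] at hx ⊢
    obtain ⟨γ, s, hs, rfl⟩ := hx
    exact ⟨g * γ, s, hs, mul_smul g γ s⟩
  have hGSiff : ∀ (g : Γ) (x : V), x ∈ ΓSᶜ ↔ g • x ∈ ΓSᶜ := by
    intro g x
    constructor
    · intro hx hgx
      exact hx (by simpa using hGS g⁻¹ _ hgx)
    · intro hgx hx
      exact hgx (hGS g x hx)
  -- reachability is preserved by the action
  have hreach : ∀ (g : Γ) (a b : ↥ΓSᶜ), (G.induce ΓSᶜ).Reachable a b →
      (G.induce ΓSᶜ).Reachable ⟨g • a.1, (hGSiff g a.1).mp a.2⟩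
        ⟨g • b.1, (hGSiff g b.1).mp b.2⟩ := by
    intro g a b h
    exact h.map (⟨fun x => ⟨g • x.1, (hGSiff g x.1).mp x.2⟩, fun hab => by
        simp only [SimpleGraph.comap_adj] at hab ⊢
        exact (hAdj g _ _).mpr hab⟩ : G.induce ΓSᶜ →g G.induce ΓSᶜ)
  -- membership in V₁
  have memV₁ : ∀ v : V, v ∈ V₁ ↔ ∃ hv : v ∈ ΓSᶜ,
      (G.induce ΓSᶜ).connectedComponentMk ⟨v, hv⟩ = c := by
    intro v
    rw [hV₁]
    constructor
    · rintro ⟨u, hu, rfl⟩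
      exact ⟨u.2, by simpa [SimpleGraph.ConnectedComponent.mem_supp_iff] using hu⟩
    · rintro ⟨hv, h⟩
      exact ⟨⟨v, hv⟩, by simpa [SimpleGraph.ConnectedComponent.mem_supp_iff] using h, rfl⟩
  -- key: if g • w ∈ V₁ with w ∈ ΓSᶜ, membership in V₁ is determined by the component of w
  have hkey : ∀ (g : Γ) (w : V) (hw : w ∈ ΓSᶜ), g • w ∈ V₁ →
      ∀ v : V, v ∈ V₁ ↔ ∃ hv : g⁻¹ • v ∈ ΓSᶜ,
        (G.induce ΓSᶜ).connectedComponentMk ⟨g⁻¹ • v, hv⟩ =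
          (G.induce ΓSᶜ).connectedComponentMk ⟨w, hw⟩ := by
    intro g w hw hgw v
    obtain ⟨hgw', hcw⟩ := (memV₁ (g • w)).mp hgw
    constructor
    · rintro hv
      obtain ⟨hv', hcv⟩ := (memV₁ v).mp hv
      have hr : (G.induce ΓSᶜ).Reachable ⟨v, hv'⟩ ⟨g • w, hgw'⟩ :=
        (SimpleGraph.ConnectedComponent.eq).mp (hcv.trans hcw.symm)
      have hr2 := hreach g⁻¹ ⟨v, hv'⟩ ⟨g • w, hgw'⟩ hr
      refine ⟨(hGSiff g⁻¹ v).mp hv', ?_⟩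
      have hww : (⟨g⁻¹ • (g • w), (hGSiff g⁻¹ (g • w)).mp hgw'⟩ : ↥ΓSᶜ) = ⟨w, hw⟩ := by
        ext; simp
      rw [← hww]
      exact (SimpleGraph.ConnectedComponent.eq).mpr hr2
    · rintro ⟨hv, hcv⟩
      have hr : (G.induce ΓSᶜ).Reachable ⟨g⁻¹ • v, hv⟩ ⟨w, hw⟩ :=
        (SimpleGraph.ConnectedComponent.eq).mp hcv
      have hr2 := hreach g ⟨g⁻¹ • v, hv⟩ ⟨w, hw⟩ hr
      have hvv : (⟨g • (g⁻¹ • v), (hGSiff g _).mp hv⟩ : ↥ΓSᶜ)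
          = ⟨v, (hGSiff g⁻¹ v).mpr (by simpa using hv)⟩ := by
        ext; simp
      rw [hvv] at hr2
      refine (memV₁ v).mpr ⟨(hGSiff g⁻¹ v).mpr (by simpa using hv), ?_⟩
      exact ((SimpleGraph.ConnectedComponent.eq).mpr hr2).trans hcw
  -- choose representatives
  set P : V → Prop := fun w => ∃ g : Γ, g • w ∈ V₁ with hP
  set f : V → V := fun w => if h : P w then (Classical.choose h) • w else w with hf
  refine ⟨(W.filter P).image f, ?_, ?_⟩
  · intro x hx
    simp only [Finset.coe_image, Set.mem_image, Finset.mem_coe, Finset.mem_filter] at hx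
    obtain ⟨w, ⟨-, hw⟩, rfl⟩ := hx
    simp only [hf, dif_pos hw]
    exact Classical.choose_spec hw
  · intro v hv
    obtain ⟨γ, w, hwW, hγw⟩ := hW v
    have hPw : P w := ⟨γ, by rwa [hγw]⟩
    have hwS : w ∈ ΓSᶜ := by
      have hvS : v ∈ ΓSᶜ := ((memV₁ v).mp hv).1
      have := (hGSiff γ⁻¹ v).mp hvS
      rwa [← hγw, inv_smul_smul] at this
    set g := Classical.choose hPw with hg
    have hgw : g • w ∈ V₁ := Classical.choose_spec hPw
    refine ⟨γ * g⁻¹, ?_, f w, ?_, ?_⟩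
    · -- stabilizer
      have key1 := hkey γ w hwS (by rwa [hγw]) -- v ∈ V₁ ↔ Q(γ⁻¹ v)
      have key2 := hkey g w hwS hgw
      have hiff : ∀ x : V, x ∈ V₁ ↔ (γ * g⁻¹)⁻¹ • x ∈ V₁ := by
        intro x
        rw [key1 x, key2 ((γ * g⁻¹)⁻¹ • x)]
        have : g⁻¹ • (γ * g⁻¹)⁻¹ • x = γ⁻¹ • x := by
          rw [← mul_smul]; congr 1; group
        rw [this]
      have : (γ * g⁻¹) • V₁ = V₁ := by
        ext x
        rw [Set.mem_smul_set_iff_inv_smul_mem]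
        exact (hiff x).symm
      exact this
    · refine Finset.mem_image.mpr ⟨w, Finset.mem_filter.mpr ⟨hwW, hPw⟩, rfl⟩
    · simp only [hf, dif_pos hPw, ← hg, ← mul_smul]
      rw [← hγw]; congr 1; group
end

section
/- Suppose a sequence of counts satisfies: for all n, b_n(ξn) ≤ Σ_{i=1}^{⌊ξn⌋} C(N, i) (μ(1-ε))^{Nm - im} (μ(1+ε))^{im} c_{n-Nm}, where N = ⌊n/m⌋, c_k ≤ D μ^k(1+ε)^k for a constant D, and ε ∈ (0,1), m ≥ 1 fixed. Then for all sufficiently small ξ > 0, limsup_{n→∞} b_n(ξn)^{1/n} < μ. -/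
open Filter

private lemma sum_choose_mul_pow_le (N M : ℕ) (y : ℝ) (hy : 0 ≤ y) :
    ∑ i ∈ Finset.range (M + 1), (N.choose i : ℝ) * y ^ i ≤ (1 + y) ^ N := by
  have h1 : ((1 : ℝ) + y) ^ N = ∑ i ∈ Finset.range (N + 1), (N.choose i : ℝ) * y ^ i := by
    rw [add_comm, add_pow]
    refine Finset.sum_congr rfl fun i _ => ?_
    ring
  have h2 : ∑ i ∈ Finset.range (M + 1), (N.choose i : ℝ) * y ^ i
      ≤ ∑ i ∈ Finset.range (max M N + 1), (N.choose i : ℝ) * y ^ i := by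
    apply Finset.sum_le_sum_of_subset_of_nonneg
    · exact Finset.range_subset_range.2 (by omega)
    · intro i _ _; positivity
  have h3 : ∑ i ∈ Finset.range (N + 1), (N.choose i : ℝ) * y ^ i
      = ∑ i ∈ Finset.range (max M N + 1), (N.choose i : ℝ) * y ^ i := by
    apply Finset.sum_subset (Finset.range_subset_range.2 (by omega))
    intro i hi hni
    have hNi : N < i := by
      simp only [Finset.mem_range] at hni; omega
    rw [Nat.choose_eq_zero_of_lt hNi]; simp
  rw [h1, h3]; exact h2

private lemma limsup_rpow_lt (μ C Q : ℝ) (hC : 0 < C) (hQ0 : 0 < Q) (hQμ : Q < μ)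
    (f : ℕ → ℝ) (hf0 : ∀ n, 0 ≤ f n) (hf : ∀ n, f n ≤ C * Q ^ n) :
    Filter.limsup (fun n : ℕ => (f n) ^ ((1 : ℝ) / n)) atTop < μ := by
  set Q' := (Q + μ) / 2 with hQ'def
  have hQQ' : Q < Q' := by rw [hQ'def]; linarith
  have hQ'μ : Q' < μ := by rw [hQ'def]; linarith
  have hten : Tendsto (fun n : ℕ => C ^ ((1 : ℝ) / n) * Q) atTop (nhds Q) := by
    have h1 : Tendsto (fun n : ℕ => (1 : ℝ) / n) atTop (nhds 0) :=
      tendsto_one_div_atTop_nhds_zero_nat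
    have h2 : ContinuousAt (fun z : ℝ => C ^ z) 0 :=
      Real.continuousAt_const_rpow (ne_of_gt hC)
    have h3 : Tendsto (fun n : ℕ => C ^ ((1 : ℝ) / n)) atTop (nhds 1) := by
      have := h2.tendsto.comp h1
      simpa [Real.rpow_zero, Function.comp_def] using this
    simpa using h3.mul_const Q
  have hev : ∀ᶠ n : ℕ in atTop, (f n) ^ ((1 : ℝ) / n) ≤ Q' := by
    filter_upwards [hten.eventually_lt_const hQQ', eventually_ge_atTop 1] with n h1 h2
    have hn0 : (n : ℝ) ≠ 0 := by positivity
    calc (f n) ^ ((1 : ℝ) / n) ≤ (C * Q ^ n) ^ ((1 : ℝ) / n) :=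
          Real.rpow_le_rpow (hf0 n) (hf n) (by positivity)
      _ = C ^ ((1 : ℝ) / n) * Q := by
          rw [Real.mul_rpow hC.le (by positivity), ← Real.rpow_natCast Q n,
            ← Real.rpow_mul hQ0.le, mul_one_div, div_self hn0, Real.rpow_one]
      _ ≤ Q' := h1.le
  have hcb : IsCoboundedUnder (· ≤ ·) atTop (fun n : ℕ => (f n) ^ ((1 : ℝ) / n)) :=
    Filter.isCoboundedUnder_le_of_le atTop (fun n => Real.rpow_nonneg (hf0 n) _)
  exact lt_of_le_of_lt (Filter.limsup_le_of_le hcb hev) hQ'μ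

theorem stmt_17 (μ ε : ℝ) (m : ℕ) (hμ : 1 < μ) (hε0 : 0 < ε) (hε1 : ε < 1) (hm : 1 ≤ m)
    (b : ℝ → ℕ → ℝ) (c : ℕ → ℝ) (D : ℝ) (hD : 0 < D)
    (hbnonneg : ∀ ξ n, 0 ≤ b ξ n)
    (hc : ∀ k : ℕ, c k ≤ D * (μ * (1 + ε)) ^ k)
    (hb : ∀ ξ : ℝ, 0 < ξ → ∀ n : ℕ,
      b ξ n ≤ ∑ i ∈ Finset.Icc 1 ⌊ξ * n⌋₊,
        (Nat.choose (n / m) i : ℝ) * (μ * (1 - ε)) ^ ((n / m) * m - i * m) *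
          (μ * (1 + ε)) ^ (i * m) * c (n - (n / m) * m)) :
    ∃ ξ₀ : ℝ, 0 < ξ₀ ∧ ∀ ξ : ℝ, 0 < ξ → ξ ≤ ξ₀ →
      Filter.limsup (fun n : ℕ => (b ξ n) ^ ((1 : ℝ) / n)) atTop < μ := by
  have hμ0 : (0 : ℝ) < μ := by linarith
  have hm0 : (0 : ℝ) < m := by exact_mod_cast hm
  set δ : ℝ := 1 - ε with hδdef
  have hδ0 : (0 : ℝ) < δ := by rw [hδdef]; linarith
  have hδ1 : δ < 1 := by rw [hδdef]; linarith
  set y : ℝ := (1 + ε) / δ with hydef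
  have hy1 : 1 ≤ y := by
    rw [hydef, le_div_iff₀ hδ0]; rw [hδdef]; linarith
  set x : ℝ := y ^ m with hxdef
  have hy0 : 0 < y := by linarith
  have hx1 : 1 ≤ x := one_le_pow₀ hy1
  have hx0 : 0 < x := by linarith
  set h : ℝ := δ ^ (-(m : ℝ) / 2) with hhdef
  have hh1 : 1 < h := by
    rw [hhdef]
    exact (Real.one_lt_rpow_iff_of_pos hδ0).2 (Or.inr ⟨hδ1, by
      have : (0:ℝ) < (m:ℝ) := hm0
      linarith⟩)
  set t : ℝ := min 1 ((h - 1) / (2 * x)) with htdef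
  have ht0 : 0 < t := lt_min one_pos (div_pos (by linarith) (by positivity))
  have ht1 : t ≤ 1 := min_le_left _ _
  have ht1' : 1 ≤ 1 / t := one_le_one_div ht0 ht1
  have htx : 1 + t * x < h := by
    have h2 : t * x ≤ (h - 1) / 2 := by
      have h3 : t ≤ (h - 1) / (2 * x) := min_le_right _ _
      have h4 : t * x ≤ (h - 1) / (2 * x) * x :=
        mul_le_mul_of_nonneg_right h3 (by linarith)
      have h5 : (h - 1) / (2 * x) * x = (h - 1) / 2 := by
        field_simp
      linarith [h5 ▸ h4]
    linarith
  have htx0 : (1 : ℝ) ≤ 1 + t * x := by nlinarith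
  set B : ℝ := (1 + t * x) ^ ((1 : ℝ) / m) with hBdef
  have hB0 : 0 < B := by rw [hBdef]; positivity
  have hδB : δ * B < 1 := by
    have h1 : B < (δ ^ (-(m : ℝ) / 2)) ^ ((1 : ℝ) / m) := by
      rw [hBdef, ← hhdef]
      exact Real.rpow_lt_rpow (by linarith) htx (by positivity)
    have h2 : (δ ^ (-(m : ℝ) / 2)) ^ ((1 : ℝ) / m) = δ ^ (-(1 : ℝ) / 2) := by
      rw [← Real.rpow_mul hδ0.le]
      congr 1
      field_simp
    have h3 : δ * δ ^ (-(1 : ℝ) / 2) = δ ^ ((1 : ℝ) / 2) := by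
      have h4 := Real.rpow_add hδ0 1 (-(1 : ℝ) / 2)
      rw [Real.rpow_one] at h4
      rw [← h4]; norm_num
    have h4 : δ ^ ((1 : ℝ) / 2) < 1 := Real.rpow_lt_one hδ0.le hδ1 (by norm_num)
    calc δ * B < δ * δ ^ (-(1 : ℝ) / 2) :=
          mul_lt_mul_of_pos_left (h1.trans_eq h2) hδ0
      _ = δ ^ ((1 : ℝ) / 2) := h3
      _ < 1 := h4
  have hδBpos : 0 < δ * B := by positivity
  clear_value δ y x h t B
  -- choose ξ₀ by continuity of z ↦ (1/t)^z at 0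
  have hcont : Tendsto (fun z : ℝ => (1 / t) ^ z) (nhds 0) (nhds 1) := by
    have h2 : ContinuousAt (fun z : ℝ => (1 / t) ^ z) 0 :=
      Real.continuousAt_const_rpow (by positivity)
    simpa [Real.rpow_zero] using h2.tendsto
  have h1δB : 1 < 1 / (δ * B) := by
    rw [lt_div_iff₀ hδBpos]; linarith
  have hev := hcont.eventually_lt_const h1δB
  rw [Metric.eventually_nhds_iff] at hev
  obtain ⟨r, hr0, hr⟩ := hev
  refine ⟨r / 2, by positivity, ?_⟩
  intro ξ hξ0 hξr
  set A : ℝ := (1 / t) ^ (ξ : ℝ) with hAdef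
  have hA0 : 0 < A := by rw [hAdef]; positivity
  have hA : A < 1 / (δ * B) := by
    rw [hAdef]
    apply hr
    rw [Real.dist_eq, sub_zero, abs_of_pos hξ0]
    linarith
  set Q : ℝ := μ * δ * A * B with hQdef
  have hQ0 : 0 < Q := by rw [hQdef]; positivity
  have hQμ : Q < μ := by
    have h5 : A * (δ * B) < 1 := (lt_div_iff₀ hδBpos).1 hA
    calc Q = μ * (A * (δ * B)) := by rw [hQdef]; ring
      _ < μ * 1 := mul_lt_mul_of_pos_left h5 hμ0
      _ = μ := mul_one μ
  set D' : ℝ := D * (μ * (1 + ε)) ^ m with hD'def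
  have hD'0 : 0 < D' := by rw [hD'def]; positivity
  set C₀ : ℝ := D' * (δ ^ m)⁻¹ with hC₀def
  have hC₀ : 0 < C₀ := by rw [hC₀def]; positivity
  clear_value A Q D' C₀
  have hμε1 : 1 ≤ μ * (1 + ε) := by nlinarith
  apply limsup_rpow_lt μ C₀ Q hC₀ hQ0 hQμ _ (hbnonneg ξ)
  intro n
  set N := n / m with hNdef
  set K := ⌊ξ * (n : ℕ)⌋₊ with hKdef
  have hNm_le : N * m ≤ n := Nat.div_mul_le_self n m
  have hnNm : n ≤ N * m + m := by
    have h9 := Nat.lt_div_mul_add (a := n) (b := m) (by omega)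
    rw [← hNdef] at h9
    omega
  -- Step 1: per-term bound
  have step1 : b ξ n ≤ D' * (μ ^ (N * m) * δ ^ (N * m)) *
      ∑ i ∈ Finset.Icc 1 K, (N.choose i : ℝ) * x ^ i := by
    refine (hb ξ hξ0 n).trans ?_
    rw [Finset.mul_sum]
    apply Finset.sum_le_sum
    intro i hi
    rcases le_or_gt i N with hiN | hiN
    · have him : i * m ≤ N * m := Nat.mul_le_mul_right m hiN
      have hc' : c (n - N * m) ≤ D' := by
        calc c (n - N * m) ≤ D * (μ * (1 + ε)) ^ (n - N * m) := hc _
          _ ≤ D * (μ * (1 + ε)) ^ m := by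
              apply mul_le_mul_of_nonneg_left _ hD.le
              apply pow_le_pow_right₀ hμε1
              omega
          _ = D' := hD'def.symm
      have heq : (μ * δ) ^ (N * m - i * m) * (μ * (1 + ε)) ^ (i * m)
          = μ ^ (N * m) * δ ^ (N * m) * x ^ i := by
        have h1 : (1 : ℝ) + ε = δ * y := by
          rw [hydef]; field_simp
        have hxe : x ^ i = y ^ (i * m) := by
          rw [hxdef, ← pow_mul, mul_comm]
        set a := N * m - i * m with hadef
        have h2 : N * m = a + i * m := by omega
        rw [h1, hxe, h2, pow_add, pow_add, mul_pow, mul_pow]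
        ring
      calc (N.choose i : ℝ) * (μ * δ) ^ (N * m - i * m) * (μ * (1 + ε)) ^ (i * m) *
            c (n - N * m)
          ≤ (N.choose i : ℝ) * (μ * δ) ^ (N * m - i * m) * (μ * (1 + ε)) ^ (i * m) * D' := by
            apply mul_le_mul_of_nonneg_left hc'
            positivity
        _ = D' * (μ ^ (N * m) * δ ^ (N * m)) * ((N.choose i : ℝ) * x ^ i) := by
            have h6 : (N.choose i : ℝ) * (μ * δ) ^ (N * m - i * m) * (μ * (1 + ε)) ^ (i * m) * D'
                = D' * ((N.choose i : ℝ) *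
                    ((μ * δ) ^ (N * m - i * m) * (μ * (1 + ε)) ^ (i * m))) := by ring
            rw [h6, heq]; ring
    · have hz : (N.choose i : ℝ) = 0 := by
        rw [Nat.choose_eq_zero_of_lt hiN]; norm_num
      rw [hz]; simp
  -- Step 2: binomial sum bound
  have step2 : ∑ i ∈ Finset.Icc 1 K, (N.choose i : ℝ) * x ^ i
      ≤ (1 / t) ^ K * (1 + t * x) ^ N := by
    have hsub : Finset.Icc 1 K ⊆ Finset.range (K + 1) := by
      intro i hi
      simp only [Finset.mem_Icc] at hi
      simp only [Finset.mem_range]; omega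
    calc ∑ i ∈ Finset.Icc 1 K, (N.choose i : ℝ) * x ^ i
        ≤ ∑ i ∈ Finset.Icc 1 K, (1 / t) ^ K * ((N.choose i : ℝ) * (t * x) ^ i) := by
          apply Finset.sum_le_sum
          intro i hi
          have hiK : i ≤ K := (Finset.mem_Icc.1 hi).2
          have hx_eq : x ^ i = (1 / t) ^ i * (t * x) ^ i := by
            rw [← mul_pow]
            congr 1
            field_simp
          have hmono : ((1 : ℝ) / t) ^ i ≤ (1 / t) ^ K := pow_le_pow_right₀ ht1' hiK
          calc (N.choose i : ℝ) * x ^ i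
              = (1 / t) ^ i * ((N.choose i : ℝ) * (t * x) ^ i) := by rw [hx_eq]; ring
            _ ≤ (1 / t) ^ K * ((N.choose i : ℝ) * (t * x) ^ i) := by
                apply mul_le_mul_of_nonneg_right hmono
                positivity
      _ = (1 / t) ^ K * ∑ i ∈ Finset.Icc 1 K, (N.choose i : ℝ) * (t * x) ^ i := by
          rw [Finset.mul_sum]
      _ ≤ (1 / t) ^ K * (1 + t * x) ^ N := by
          apply mul_le_mul_of_nonneg_left _ (by positivity)
          calc ∑ i ∈ Finset.Icc 1 K, (N.choose i : ℝ) * (t * x) ^ i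
              ≤ ∑ i ∈ Finset.range (K + 1), (N.choose i : ℝ) * (t * x) ^ i :=
                Finset.sum_le_sum_of_subset_of_nonneg hsub (fun i _ _ => by positivity)
            _ ≤ (1 + t * x) ^ N := sum_choose_mul_pow_le N K (t * x) (by positivity)
  -- Step 3: exponent comparisons
  have f1 : μ ^ (N * m) ≤ μ ^ n := pow_le_pow_right₀ hμ.le hNm_le
  have f2 : δ ^ (N * m) ≤ (δ ^ m)⁻¹ * δ ^ n := by
    have h5 : δ ^ (N * m + m) ≤ δ ^ n := pow_le_pow_of_le_one hδ0.le hδ1.le hnNm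
    rw [pow_add] at h5
    rw [inv_mul_eq_div, le_div_iff₀ (by positivity)]
    linarith
  have f3 : ((1 : ℝ) / t) ^ K ≤ A ^ n := by
    have h2 : (K : ℝ) ≤ ξ * n := Nat.floor_le (by positivity)
    have h3 : ((1 : ℝ) / t) ^ ((K : ℕ) : ℝ) ≤ (1 / t) ^ (ξ * (n : ℝ)) :=
      Real.rpow_le_rpow_of_exponent_le ht1' h2
    have h4 : ((1 : ℝ) / t) ^ (ξ * (n : ℝ)) = A ^ n := by
      rw [Real.rpow_mul (by positivity), hAdef, Real.rpow_natCast]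
    rw [← Real.rpow_natCast (1 / t) K]
    rw [h4] at h3
    exact h3
  have f4 : (1 + t * x) ^ N ≤ B ^ n := by
    have h2 : (N : ℝ) ≤ (n : ℝ) / m := by
      rw [le_div_iff₀ hm0]
      exact_mod_cast hNm_le
    calc (1 + t * x) ^ N = (1 + t * x) ^ ((N : ℕ) : ℝ) := (Real.rpow_natCast _ _).symm
      _ ≤ (1 + t * x) ^ ((n : ℝ) / m) := Real.rpow_le_rpow_of_exponent_le htx0 h2
      _ = B ^ n := by
          rw [show (n : ℝ) / m = (1 / m) * n by ring, Real.rpow_mul (by positivity),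
            hBdef, Real.rpow_natCast]
  -- combine
  have g1 : μ ^ (N * m) * δ ^ (N * m) ≤ μ ^ n * ((δ ^ m)⁻¹ * δ ^ n) :=
    mul_le_mul f1 f2 (by positivity) (by positivity)
  have g2 : ((1 : ℝ) / t) ^ K * (1 + t * x) ^ N ≤ A ^ n * B ^ n :=
    mul_le_mul f3 f4 (by positivity) (by positivity)
  calc b ξ n ≤ D' * (μ ^ (N * m) * δ ^ (N * m)) *
        ∑ i ∈ Finset.Icc 1 K, (N.choose i : ℝ) * x ^ i := step1
    _ ≤ D' * (μ ^ (N * m) * δ ^ (N * m)) * ((1 / t) ^ K * (1 + t * x) ^ N) := by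
        apply mul_le_mul_of_nonneg_left step2
        positivity
    _ ≤ D' * (μ ^ n * ((δ ^ m)⁻¹ * δ ^ n)) * (A ^ n * B ^ n) := by
        apply mul_le_mul (mul_le_mul_of_nonneg_left g1 hD'0.le) g2 (by positivity)
        positivity
    _ = C₀ * Q ^ n := by
        rw [hC₀def, hQdef, mul_pow, mul_pow, mul_pow]
        ring
end
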